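/- In the prompt-tuned memory-augmented HMM with prompt π defined by π_{(m_{1:N},j,s)} = 1 if m_{j*} ∈ supp(b) and 0 otherwise, assume the initial hidden-state distribution is stationary (P(H_0) = A P(H_0)). Then for every x ∈ X^T with P(X̂ = x̂) > 0: b^T P(M_{j*} | X̂ = x̂) = b^T P(M_{j*} | X_{1:T} = x) / P(X̂_1 = z̃ | X̂_{2:T+1} = x). -/

import Mathlib

open scoped Classical
open Matrix

noncomputable section

/-- Forward pass for a Markov chain with transition matrix `A`. -/
def fwdVec {H : Type*} [Fintype H] (A : Matrix H H ℝ) :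
    (H → ℝ) → List (H → ℝ) → (H → ℝ)
  | μ, [] => μ
  | μ, v :: vs => fwdVec A (A.mulVec fun h => μ h * v h) vs

/-- `mJointAt A μ W m x i g = P(H_i = g, X_{−i} = x_{−i} | M = m)` in a
memory-augmented HMM (hidden chain `H_1, …, H_T`, `P(H_1) = A μ`). -/
def mJointAt {𝕄 S X : Type*} {N T : ℕ} [Fintype S] [DecidableEq S]
    (A : Matrix (Fin N × S) (Fin N × S) ℝ) (μ : Fin N × S → ℝ)
    (W : X → 𝕄 → Fin N × S → ℝ) (m : Fin N → 𝕄)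
    (x : Fin T → X) (i : Fin T) (g : Fin N × S) : ℝ :=
  ∑ h, fwdVec A (A.mulVec μ)
    (List.ofFn fun k : Fin T =>
      if k = i then (fun g' => if g' = g then 1 else 0)
      else fun g' => W (x k) (m g'.1) g') h

/-- `mZ … x i = P(X_{−i} = x_{−i})`. -/
def mZ {𝕄 S X : Type*} {N T : ℕ} [Fintype 𝕄] [Fintype S] [DecidableEq S]
    (pM : (Fin N → 𝕄) → ℝ) (A : Matrix (Fin N × S) (Fin N × S) ℝ)
    (μ : Fin N × S → ℝ) (W : X → 𝕄 → Fin N × S → ℝ)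
    (x : Fin T → X) (i : Fin T) : ℝ :=
  ∑ m, pM m * ∑ g, mJointAt A μ W m x i g

/-- `mSeqPm … m x = P(X_{1:T} = x | M = m)`. -/
def mSeqPm {𝕄 S X : Type*} {N T : ℕ} [Fintype S]
    (A : Matrix (Fin N × S) (Fin N × S) ℝ) (μ : Fin N × S → ℝ)
    (W : X → 𝕄 → Fin N × S → ℝ) (m : Fin N → 𝕄) (x : Fin T → X) : ℝ :=
  ∑ h, fwdVec A (A.mulVec μ)
    (List.ofFn fun k : Fin T => fun g' => W (x k) (m g'.1) g') h

/-- `mSeqP … x = P(X_{1:T} = x)`. -/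
def mSeqP {𝕄 S X : Type*} {N T : ℕ} [Fintype 𝕄] [Fintype S]
    (pM : (Fin N → 𝕄) → ℝ) (A : Matrix (Fin N × S) (Fin N × S) ℝ)
    (μ : Fin N × S → ℝ) (W : X → 𝕄 → Fin N × S → ℝ) (x : Fin T → X) : ℝ :=
  ∑ m, pM m * mSeqPm A μ W m x

/-- `mGtok … x i z = P(X_i = z | X_{−i} = x_{−i})`, the pretrained model
output `G_i(x)` at position `i`. -/
def mGtok {𝕄 S X : Type*} {N T : ℕ} [Fintype 𝕄] [Fintype S] [DecidableEq S]
    (pM : (Fin N → 𝕄) → ℝ) (A : Matrix (Fin N × S) (Fin N × S) ℝ)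
    (μ : Fin N × S → ℝ) (W : X → 𝕄 → Fin N × S → ℝ)
    (x : Fin T → X) (i : Fin T) (z : X) : ℝ :=
  (∑ m, pM m * ∑ g, mJointAt A μ W m x i g * W z (m g.1) g) / mZ pM A μ W x i

/-- `mPostH … x i g = P(H_i = g | X_{−i} = x_{−i})`. -/
def mPostH {𝕄 S X : Type*} {N T : ℕ} [Fintype 𝕄] [Fintype S] [DecidableEq S]
    (pM : (Fin N → 𝕄) → ℝ) (A : Matrix (Fin N × S) (Fin N × S) ℝ)
    (μ : Fin N × S → ℝ) (W : X → 𝕄 → Fin N × S → ℝ)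
    (x : Fin T → X) (i : Fin T) (g : Fin N × S) : ℝ :=
  (∑ m, pM m * mJointAt A μ W m x i g) / mZ pM A μ W x i

/-- The 0/1 prompt of the paper: `π_{(m_{1:N},j,s)} = 1` if `m_{j*} ∈ supp(b)`
and `0` otherwise (it does not depend on `(j,s)`). -/
def promptV {𝕄 : Type*} {N : ℕ} (b : 𝕄 → ℝ) (jstar : Fin N)
    (m : Fin N → 𝕄) : ℝ :=
  if b (m jstar) ≠ 0 then 1 else 0

/-- Conditioned on `M = m`, the emission-likelihood vector at position `k`
(0-indexed) of the modified sequence `x̂ = (z̃, x_1, …, x_T)`: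
at position `0` the fake token `z̃` has likelihood `π_{(m,j,s)}`, and at
position `k ≥ 1` the token `x_k` has likelihood `W (x_k) (m j) (j,s)`. -/
def hatEm {𝕄 S X : Type*} {N T : ℕ} (W : X → 𝕄 → Fin N × S → ℝ)
    (b : 𝕄 → ℝ) (jstar : Fin N) (m : Fin N → 𝕄) (x : Fin T → X)
    (k : Fin (T + 1)) : Fin N × S → ℝ :=
  if hk : (k : ℕ) = 0 then fun _ => promptV b jstar m
  else fun g => W (x ⟨(k : ℕ) - 1, by have := k.isLt; omega⟩) (m g.1) g

/-- `hatJointAt … m x i g = P(H_i = g, X̂_{−i} = x̂_{−i} | M = m)` for the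
modified sequence `X̂` of length `T+1` (hidden chain `H_1, …, H_{T+1}`,
`P(H_1) = A μ`). -/
def hatJointAt {𝕄 S X : Type*} {N T : ℕ} [Fintype S] [DecidableEq S]
    (A : Matrix (Fin N × S) (Fin N × S) ℝ) (μ : Fin N × S → ℝ)
    (W : X → 𝕄 → Fin N × S → ℝ) (b : 𝕄 → ℝ) (jstar : Fin N)
    (m : Fin N → 𝕄) (x : Fin T → X) (i : Fin (T + 1)) (g : Fin N × S) : ℝ :=
  ∑ h, fwdVec A (A.mulVec μ)
    (List.ofFn fun k : Fin (T + 1) =>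
      if k = i then (fun g' => if g' = g then 1 else 0)
      else hatEm W b jstar m x k) h

/-- `hatZ … x i = P(X̂_{−i} = x̂_{−i})`. -/
def hatZ {𝕄 S X : Type*} {N T : ℕ} [Fintype 𝕄] [Fintype S] [DecidableEq S]
    (pM : (Fin N → 𝕄) → ℝ) (A : Matrix (Fin N × S) (Fin N × S) ℝ)
    (μ : Fin N × S → ℝ) (W : X → 𝕄 → Fin N × S → ℝ) (b : 𝕄 → ℝ)
    (jstar : Fin N) (x : Fin T → X) (i : Fin (T + 1)) : ℝ :=
  ∑ m, pM m * ∑ g, hatJointAt A μ W b jstar m x i g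

/-- `hatSeqPm … m x = P(X̂ = x̂ | M = m)`. -/
def hatSeqPm {𝕄 S X : Type*} {N T : ℕ} [Fintype S]
    (A : Matrix (Fin N × S) (Fin N × S) ℝ) (μ : Fin N × S → ℝ)
    (W : X → 𝕄 → Fin N × S → ℝ) (b : 𝕄 → ℝ) (jstar : Fin N)
    (m : Fin N → 𝕄) (x : Fin T → X) : ℝ :=
  ∑ h, fwdVec A (A.mulVec μ) (List.ofFn (hatEm W b jstar m x)) h

/-- `hatSeqP … x = P(X̂ = x̂)`. -/
def hatSeqP {𝕄 S X : Type*} {N T : ℕ} [Fintype 𝕄] [Fintype S]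
    (pM : (Fin N → 𝕄) → ℝ) (A : Matrix (Fin N × S) (Fin N × S) ℝ)
    (μ : Fin N × S → ℝ) (W : X → 𝕄 → Fin N × S → ℝ) (b : 𝕄 → ℝ)
    (jstar : Fin N) (x : Fin T → X) : ℝ :=
  ∑ m, pM m * hatSeqPm A μ W b jstar m x

section Aux

variable {H : Type*} [Fintype H]

lemma fwdVec_cons (A : Matrix H H ℝ) (μ v : H → ℝ) (vs : List (H → ℝ)) :
    fwdVec A μ (v :: vs) = fwdVec A (A.mulVec fun h => μ h * v h) vs := rfl

lemma fwd_smul (A : Matrix H H ℝ) (c : ℝ) :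
    ∀ (vs : List (H → ℝ)) (μ : H → ℝ) (h : H),
      fwdVec A (fun h' => c * μ h') vs h = c * fwdVec A μ vs h
  | [], μ, h => rfl
  | v :: vs, μ, h => by
      rw [fwdVec_cons, fwdVec_cons]
      have : (A.mulVec fun h' => (c * μ h') * v h')
          = fun h' => c * (A.mulVec fun h'' => μ h'' * v h'') h' := by
        funext h'
        simp only [Matrix.mulVec, dotProduct, Finset.mul_sum]
        exact Finset.sum_congr rfl fun j _ => by ring
      rw [this]
      exact fwd_smul A c vs _ h

lemma fwd_sum (A : Matrix H H ℝ) {G : Type*} [Fintype G] :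
    ∀ (vs : List (H → ℝ)) (f : G → H → ℝ) (h : H),
      fwdVec A (fun h' => ∑ g, f g h') vs h = ∑ g, fwdVec A (f g) vs h
  | [], f, h => rfl
  | v :: vs, f, h => by
      rw [fwdVec_cons]
      have : (A.mulVec fun h' => (∑ g, f g h') * v h')
          = fun h' => ∑ g, (A.mulVec fun h'' => f g h'' * v h'') h' := by
        funext h'
        simp only [Matrix.mulVec, dotProduct]
        rw [Finset.sum_comm]
        exact Finset.sum_congr rfl fun j _ => by rw [Finset.sum_mul, Finset.mul_sum]
      rw [this, fwd_sum A vs _ h]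
      exact Finset.sum_congr rfl fun g _ => by rw [fwdVec_cons]

lemma fwd_nonneg (A : Matrix H H ℝ) (hA : ∀ g g', 0 ≤ A g' g) :
    ∀ (vs : List (H → ℝ)), (∀ v ∈ vs, ∀ h, 0 ≤ v h) →
      ∀ (μ : H → ℝ), (∀ h, 0 ≤ μ h) → ∀ h, 0 ≤ fwdVec A μ vs h
  | [], _, μ, hμ, h => hμ h
  | v :: vs, hvs, μ, hμ, h => by
      rw [fwdVec_cons]
      refine fwd_nonneg A hA vs (fun w hw => hvs w (List.mem_cons_of_mem _ hw)) _ ?_ h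
      intro h'
      exact Finset.sum_nonneg fun j _ =>
        mul_nonneg (hA j h') (mul_nonneg (hμ j) (hvs v List.mem_cons_self j))

lemma promptV_nonneg {𝕄 : Type*} {N : ℕ} (b : 𝕄 → ℝ) (jstar : Fin N)
    (m : Fin N → 𝕄) : 0 ≤ promptV b jstar m := by
  unfold promptV; split <;> norm_num

lemma promptV_le_one {𝕄 : Type*} {N : ℕ} (b : 𝕄 → ℝ) (jstar : Fin N)
    (m : Fin N → 𝕄) : promptV b jstar m ≤ 1 := by
  unfold promptV; split <;> norm_num

lemma hatEm_succ {𝕄 S X : Type*} {N T : ℕ} (W : X → 𝕄 → Fin N × S → ℝ)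
    (b : 𝕄 → ℝ) (jstar : Fin N) (m : Fin N → 𝕄) (x : Fin T → X) (k : Fin T) :
    hatEm W b jstar m x k.succ = fun g => W (x k) (m g.1) g := by
  unfold hatEm
  rw [dif_neg (by simp)]
  funext g
  congr 2
  all_goals first | (apply Fin.ext; simp) | simp

lemma hatSeqPm_eq {𝕄 S X : Type*} {N T : ℕ} [Fintype S]
    (A : Matrix (Fin N × S) (Fin N × S) ℝ) (μ : Fin N × S → ℝ)
    (W : X → 𝕄 → Fin N × S → ℝ) (b : 𝕄 → ℝ) (jstar : Fin N)
    (m : Fin N → 𝕄) (x : Fin T → X) (hstat : A.mulVec μ = μ) :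
    hatSeqPm A μ W b jstar m x = promptV b jstar m * mSeqPm A μ W m x := by
  unfold hatSeqPm mSeqPm
  rw [List.ofFn_succ, fwdVec_cons]
  have h0 : hatEm W b jstar m x 0 = fun _ => promptV b jstar m := by
    unfold hatEm; simp
  rw [h0]
  have hmv : (A.mulVec fun h => (A.mulVec μ) h * promptV b jstar m)
      = fun h => promptV b jstar m * (A.mulVec μ) h := by
    funext h
    have : (A.mulVec fun h' => (A.mulVec μ) h' * promptV b jstar m) h
        = promptV b jstar m * (A.mulVec (A.mulVec μ)) h := by
      simp only [Matrix.mulVec, dotProduct]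
      rw [Finset.mul_sum]
      exact Finset.sum_congr rfl fun j _ => by ring
    rw [this, hstat, hstat]
  rw [hmv]
  have hlist : (List.ofFn fun k : Fin T => hatEm W b jstar m x k.succ)
      = List.ofFn fun k : Fin T => fun g' => W (x k) (m g'.1) g' :=
    congrArg List.ofFn (funext fun k => hatEm_succ W b jstar m x k)
  rw [hlist, Finset.mul_sum]
  exact Finset.sum_congr rfl fun h _ => fwd_smul A _ _ _ h

lemma sum_hatJointAt_zero {𝕄 S X : Type*} {N T : ℕ} [Fintype S] [DecidableEq S]
    (A : Matrix (Fin N × S) (Fin N × S) ℝ) (μ : Fin N × S → ℝ)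
    (W : X → 𝕄 → Fin N × S → ℝ) (b : 𝕄 → ℝ) (jstar : Fin N)
    (m : Fin N → 𝕄) (x : Fin T → X) (hstat : A.mulVec μ = μ) :
    ∑ g, hatJointAt A μ W b jstar m x 0 g = mSeqPm A μ W m x := by
  unfold hatJointAt mSeqPm
  have hlist : ∀ g : Fin N × S,
      (List.ofFn fun k : Fin (T + 1) =>
        if k = (0 : Fin (T + 1)) then (fun g' => if g' = g then (1:ℝ) else 0)
        else hatEm W b jstar m x k)
      = (fun g' => if g' = g then (1:ℝ) else 0) ::
          List.ofFn (fun k : Fin T => fun g' => W (x k) (m g'.1) g') := by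
    intro g
    rw [List.ofFn_succ, if_pos rfl]
    exact congrArg (List.cons _) (congrArg List.ofFn (funext fun k => by
      rw [if_neg (Fin.succ_ne_zero k)]
      exact hatEm_succ W b jstar m x k))
  have hstep : ∀ g : Fin N × S, ∀ h,
      fwdVec A (A.mulVec μ)
        (List.ofFn fun k : Fin (T + 1) =>
          if k = (0 : Fin (T + 1)) then (fun g' => if g' = g then (1:ℝ) else 0)
          else hatEm W b jstar m x k) h
      = fwdVec A (A.mulVec fun h' => (A.mulVec μ) h' * if h' = g then (1:ℝ) else 0)
          (List.ofFn (fun k : Fin T => fun g' => W (x k) (m g'.1) g')) h := by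
    intro g h
    rw [hlist g, fwdVec_cons]
  calc ∑ g, ∑ h, fwdVec A (A.mulVec μ)
        (List.ofFn fun k : Fin (T + 1) =>
          if k = (0 : Fin (T + 1)) then (fun g' => if g' = g then (1:ℝ) else 0)
          else hatEm W b jstar m x k) h
      = ∑ h, ∑ g : Fin N × S,
          fwdVec A (A.mulVec fun h' => (A.mulVec μ) h' * if h' = g then (1:ℝ) else 0)
            (List.ofFn (fun k : Fin T => fun g' => W (x k) (m g'.1) g')) h := by
        rw [Finset.sum_comm]
        exact Finset.sum_congr rfl fun h _ => Finset.sum_congr rfl fun g _ => hstep g h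
    _ = ∑ h, fwdVec A
          (fun h' => ∑ g : Fin N × S,
            (A.mulVec fun h'' => (A.mulVec μ) h'' * if h'' = g then (1:ℝ) else 0) h')
          (List.ofFn (fun k : Fin T => fun g' => W (x k) (m g'.1) g')) h := by
        exact Finset.sum_congr rfl fun h _ => (fwd_sum A _ _ h).symm
    _ = ∑ h, fwdVec A (A.mulVec μ)
          (List.ofFn (fun k : Fin T => fun g' => W (x k) (m g'.1) g')) h := by
        refine Finset.sum_congr rfl fun h _ => ?_
        congr 1
        funext h'
        have : ∑ g : Fin N × S,
            (A.mulVec fun h'' => (A.mulVec μ) h'' * if h'' = g then (1:ℝ) else 0) h'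
            = (A.mulVec (A.mulVec μ)) h' := by
          simp only [Matrix.mulVec, dotProduct]
          rw [Finset.sum_comm]
          refine Finset.sum_congr rfl fun j _ => ?_
          simp [mul_ite, Finset.sum_ite_eq]
        rw [this, hstat, hstat]

end Aux

/-!
STATEMENT 14 (Claim D.10 of the paper).

Prompt-tuned memory-augmented HMM with the 0/1 prompt
`π_{(m_{1:N},j,s)} = 𝟙(m_{j*} ∈ supp(b))`, assuming stationarity
(`P(H_0) = A P(H_0)`).  For every `x ∈ X^T` with `P(X̂ = x̂) > 0`:
`bᵀ P(M_{j*} | X̂ = x̂)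
    = bᵀ P(M_{j*} | X_{1:T} = x) / P(X̂_1 = z̃ | X̂_{2:T+1} = x)`,
where `P(X̂_1 = z̃ | X̂_{2:T+1} = x) = P(X̂ = x̂) / P(X̂_{2:T+1} = x)`
(the denominator `P(X̂_{2:T+1} = x)` is `P(X̂_{−1} = x̂_{−1})`, i.e. `hatZ`
at position `0`).
-/
theorem stmt14 {𝕄 S X : Type*} {N : ℕ}
    [Fintype 𝕄] [Fintype S] [Fintype X] [DecidableEq 𝕄] [DecidableEq S]
    (pM : (Fin N → 𝕄) → ℝ) (μ : Fin N × S → ℝ)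
    (A : Matrix (Fin N × S) (Fin N × S) ℝ) (W : X → 𝕄 → Fin N × S → ℝ)
    (hpM0 : ∀ m, 0 ≤ pM m) (hpM1 : ∑ m, pM m = 1)
    (hμ0 : ∀ g, 0 ≤ μ g) (hμ1 : ∑ g, μ g = 1)
    (hA0 : ∀ g g', 0 ≤ A g' g) (hA1 : ∀ g, ∑ g', A g' g = 1)
    (hW0 : ∀ z m0 g, 0 ≤ W z m0 g) (hW1 : ∀ m0 g, ∑ z, W z m0 g = 1)
    -- stationarity of the initial hidden-state distribution
    (hstat : A.mulVec μ = μ)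
    (b : 𝕄 → ℝ) (jstar : Fin N)
    (T : ℕ) (x : Fin T → X)
    (hpos : 0 < hatSeqP pM A μ W b jstar x) :
    ∑ m0, b m0 *
        ((∑ m, if m jstar = m0 then pM m * hatSeqPm A μ W b jstar m x else 0)
          / hatSeqP pM A μ W b jstar x)
      = (∑ m0, b m0 *
          ((∑ m, if m jstar = m0 then pM m * mSeqPm A μ W m x else 0)
            / mSeqP pM A μ W x))
        / (hatSeqP pM A μ W b jstar x / hatZ pM A μ W b jstar x 0) := by
  have hπ : ∀ m, hatSeqPm A μ W b jstar m x = promptV b jstar m * mSeqPm A μ W m x :=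
    fun m => hatSeqPm_eq A μ W b jstar m x hstat
  have hZ : hatZ pM A μ W b jstar x 0 = mSeqP pM A μ W x := by
    unfold hatZ mSeqP
    exact Finset.sum_congr rfl fun m _ => by
      rw [sum_hatJointAt_zero A μ W b jstar m x hstat]
  have hmnn : ∀ m, 0 ≤ mSeqPm A μ W m x := by
    intro m
    unfold mSeqPm
    refine Finset.sum_nonneg fun h _ => ?_
    refine fwd_nonneg A hA0 _ ?_ _ ?_ h
    · intro v hv h'
      obtain ⟨k, rfl⟩ := List.mem_ofFn.mp hv
      exact hW0 _ _ _
    · intro h'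
      exact Finset.sum_nonneg fun j _ => mul_nonneg (hA0 j h') (hμ0 j)
  have hle : hatSeqP pM A μ W b jstar x ≤ mSeqP pM A μ W x := by
    unfold hatSeqP mSeqP
    refine Finset.sum_le_sum fun m _ => ?_
    rw [hπ m]
    exact mul_le_mul_of_nonneg_left
      (mul_le_of_le_one_left (hmnn m) (promptV_le_one b jstar m)) (hpM0 m)
  have hP : 0 < mSeqP pM A μ W x := lt_of_lt_of_le hpos hle
  have hnum : ∀ (F : (Fin N → 𝕄) → ℝ),
      ∑ m0, b m0 * ∑ m, (if m jstar = m0 then pM m * F m else 0)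
        = ∑ m, b (m jstar) * (pM m * F m) := by
    intro F
    simp only [Finset.mul_sum, mul_ite, mul_zero]
    rw [Finset.sum_comm]
    refine Finset.sum_congr rfl fun m _ => ?_
    simp [Finset.sum_ite_eq]
  have key : ∑ m, b (m jstar) * (pM m * hatSeqPm A μ W b jstar m x)
      = ∑ m, b (m jstar) * (pM m * mSeqPm A μ W m x) := by
    refine Finset.sum_congr rfl fun m _ => ?_
    rw [hπ m]
    by_cases hb : b (m jstar) = 0
    · simp [hb]
    · rw [promptV, if_pos hb]; ring
  have hL : ∑ m0, b m0 *
        ((∑ m, if m jstar = m0 then pM m * hatSeqPm A μ W b jstar m x else 0)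
          / hatSeqP pM A μ W b jstar x)
      = (∑ m, b (m jstar) * (pM m * mSeqPm A μ W m x)) / hatSeqP pM A μ W b jstar x := by
    rw [← key, ← hnum, Finset.sum_div]
    exact Finset.sum_congr rfl fun m0 _ => (mul_div_assoc _ _ _).symm
  have hR : ∑ m0, b m0 *
        ((∑ m, if m jstar = m0 then pM m * mSeqPm A μ W m x else 0)
          / mSeqP pM A μ W x)
      = (∑ m, b (m jstar) * (pM m * mSeqPm A μ W m x)) / mSeqP pM A μ W x := by
    rw [← hnum, Finset.sum_div]
    exact Finset.sum_congr rfl fun m0 _ => (mul_div_assoc _ _ _).symm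
  rw [hL, hR, hZ]
  have h1 : hatSeqP pM A μ W b jstar x ≠ 0 := ne_of_gt hpos
  have h2 : mSeqP pM A μ W x ≠ 0 := ne_of_gt hP
  field_simp

end
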